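/- Let E be a real Hilbert space, f : E → ℝ convex and continuous, λ > 0, and x, y ∈ E. If z_x minimizes z ↦ λ f(z) + (1/2)‖z − x‖² over E and z_y minimizes z ↦ λ f(z) + (1/2)‖z − y‖² over E, then ‖z_x − z_y‖ ≤ ‖x − y‖ (the proximal operator of a convex function is nonexpansive). -/

import Mathlib

private lemma fire_limit_aux {A B : ℝ} (h : ∀ t : ℝ, t ∈ Set.Ioc (0:ℝ) 1 → 0 ≤ A + t * B) :
    0 ≤ A := by
  by_contra hA
  push_neg at hA
  set t : ℝ := min 1 (-A / (2 * (|B| + 1))) with ht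
  have hBpos : (0:ℝ) < |B| + 1 := by positivity
  have htpos : 0 < t := lt_min one_pos (div_pos (by linarith) (by positivity))
  have ht1 : t ≤ 1 := min_le_left _ _
  have ht2 : t ≤ -A / (2 * (|B| + 1)) := min_le_right _ _
  have h1 : t * (|B| + 1) ≤ -A / 2 := by
    rw [le_div_iff₀ (by positivity)] at ht2
    nlinarith
  have h2 : t * B ≤ t * (|B| + 1) := by
    apply mul_le_mul_of_nonneg_left _ htpos.le
    nlinarith [le_abs_self B]
  have := h t ⟨htpos, ht1⟩
  linarith

private lemma fire_vi {E : Type*} [NormedAddCommGroup E] [InnerProductSpace ℝ E]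
    (f : E → ℝ) (hf : ConvexOn ℝ Set.univ f)
    (lam : ℝ) (hlam : 0 < lam) (x z : E)
    (hz : ∀ w : E,
      lam * f z + (1 / 2 : ℝ) * ‖z - x‖ ^ 2 ≤ lam * f w + (1 / 2 : ℝ) * ‖w - x‖ ^ 2)
    (w : E) :
    0 ≤ lam * (f w - f z) + (inner ℝ (z - x) (w - z) : ℝ) := by
  apply fire_limit_aux (B := (1/2) * ‖w - z‖ ^ 2)
  intro t ht
  obtain ⟨ht0, ht1⟩ := ht
  have hconv := hf.2 (Set.mem_univ z) (Set.mem_univ w)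
    (by linarith : (0:ℝ) ≤ 1 - t) ht0.le (by ring)
  have heq : (1 - t) • z + t • w = z + t • (w - z) := by
    rw [sub_smul, smul_sub, one_smul]; abel
  rw [heq] at hconv
  have hmin := hz (z + t • (w - z))
  have hnorm : ‖z + t • (w - z) - x‖ ^ 2
      = ‖z - x‖ ^ 2 + 2 * (t * (inner ℝ (z - x) (w - z) : ℝ)) + t ^ 2 * ‖w - z‖ ^ 2 := by
    have : z + t • (w - z) - x = (z - x) + t • (w - z) := by abel
    rw [this, norm_add_sq_real, real_inner_smul_right, norm_smul]
    simp only [mul_pow, sq_abs, Real.norm_eq_abs]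
  rw [hnorm] at hmin
  have hfle : lam * f (z + t • (w - z)) ≤ lam * ((1 - t) * f z + t * f w) :=
    mul_le_mul_of_nonneg_left hconv hlam.le
  have key : 0 ≤ t * ((lam * (f w - f z) + (inner ℝ (z - x) (w - z) : ℝ))
      + t * ((1/2) * ‖w - z‖ ^ 2)) := by nlinarith
  have := le_of_mul_le_mul_left (by linarith : t * 0 ≤ t * ((lam * (f w - f z) +
      (inner ℝ (z - x) (w - z) : ℝ)) + t * ((1/2) * ‖w - z‖ ^ 2))) ht0
  linarith

/-- The proximal operator of a convex continuous function on a real Hilbert space is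
nonexpansive: if `z_x` minimizes `z ↦ λ f(z) + (1/2)‖z − x‖²` and `z_y` minimizes
`z ↦ λ f(z) + (1/2)‖z − y‖²`, then `‖z_x − z_y‖ ≤ ‖x − y‖`. -/
theorem fire_prox_nonexpansive
    {E : Type*} [NormedAddCommGroup E] [InnerProductSpace ℝ E] [CompleteSpace E]
    (f : E → ℝ) (hf : ConvexOn ℝ Set.univ f) (hfc : Continuous f)
    (lam : ℝ) (hlam : 0 < lam) (x y zx zy : E)
    (hzx : ∀ w : E,
      lam * f zx + (1 / 2 : ℝ) * ‖zx - x‖ ^ 2 ≤ lam * f w + (1 / 2 : ℝ) * ‖w - x‖ ^ 2)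
    (hzy : ∀ w : E,
      lam * f zy + (1 / 2 : ℝ) * ‖zy - y‖ ^ 2 ≤ lam * f w + (1 / 2 : ℝ) * ‖w - y‖ ^ 2) :
    ‖zx - zy‖ ≤ ‖x - y‖ := by
  have h1 := fire_vi f hf lam hlam x zx hzx zy
  have h2 := fire_vi f hf lam hlam y zy hzy zx
  have hsum : 0 ≤ (inner ℝ (zx - x) (zy - zx) : ℝ) + (inner ℝ (zy - y) (zx - zy) : ℝ) := by linarith
  have hinner : (inner ℝ (zx - x) (zy - zx) : ℝ) + (inner ℝ (zy - y) (zx - zy) : ℝ)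
      = (inner ℝ (x - y) (zx - zy) : ℝ) - (inner ℝ (zx - zy) (zx - zy) : ℝ) := by
    simp only [inner_sub_left, inner_sub_right]
    ring
  rw [hinner] at hsum
  have hns : (inner ℝ (zx - zy) (zx - zy) : ℝ) = ‖zx - zy‖ ^ 2 := real_inner_self_eq_norm_sq _
  have hcs : (inner ℝ (x - y) (zx - zy) : ℝ) ≤ ‖x - y‖ * ‖zx - zy‖ := real_inner_le_norm _ _
  rcases eq_or_lt_of_le (norm_nonneg (zx - zy)) with h0 | h0
  · rw [← h0]; exact norm_nonneg _
  · have : ‖zx - zy‖ ^ 2 ≤ ‖x - y‖ * ‖zx - zy‖ := by linarith [hns ▸ hsum]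
    nlinarith
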